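/- If μ̄ solves the Lyapunov measure equation γ[P_T¹ μ̄](B) − μ̄(B) = −m(B) for all B ∈ B(X \ U(ε)) with γ > 1 and μ̄ ≥ 0 finite, then for every set B with m(B) > 0, the iterates satisfy [(P_T¹)ⁿ m](B) ≤ γ^{-n} μ̄(B); in particular [(P_T¹)ⁿ m](B) → 0 geometrically. -/
import Mathlib


open MeasureTheory ENNReal

/-- If `μ̄` solves the Lyapunov measure equation `γ [P¹_T μ̄](B) + m(B) = μ̄(B)` with
`γ > 1` and `μ̄ ≥ 0` finite, then for every measurable `B` with `m(B) > 0` the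
iterates decay geometrically: `[(P¹_T)ⁿ m](B) ≤ γ⁻ⁿ μ̄(B)`. -/
theorem lyapunov_measure_geometric_decay
    {S : Type*} [MeasurableSpace S]
    (P : Measure S → Measure S)
    (hadd : ∀ μ ν : Measure S, P (μ + ν) = P μ + P ν)
    (hsmul : ∀ (c : ℝ≥0∞) (μ : Measure S), P (c • μ) = c • P μ)
    (hmono : ∀ μ ν : Measure S, μ ≤ ν → P μ ≤ P ν)
    (m : Measure S) [IsFiniteMeasure m]
    (μbar : Measure S) [IsFiniteMeasure μbar]
    (γ : ℝ≥0∞) (hγ : 1 < γ)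
    (heq : ∀ B : Set S, MeasurableSet B → γ * (P μbar) B + m B = μbar B) :
    ∀ (B : Set S), MeasurableSet B → 0 < m B →
      ∀ n : ℕ, (P^[n] m) B ≤ γ⁻¹ ^ n * μbar B := by
  have hγ0 : γ ≠ 0 := by positivity
  -- m ≤ μbar
  have hm : m ≤ μbar := by
    rw [Measure.le_iff]
    intro B hB
    calc m B ≤ γ * (P μbar) B + m B := le_add_self
    _ = μbar B := heq B hB
  -- P μbar ≤ γ⁻¹ • μbar
  have hPμ : P μbar ≤ γ⁻¹ • μbar := by
    rw [Measure.le_iff]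
    intro B hB
    have h1 : γ * (P μbar) B ≤ μbar B := (heq B hB) ▸ le_add_right le_rfl
    have : (P μbar) B ≤ μbar B / γ := by
      rw [ENNReal.le_div_iff_mul_le (Or.inl hγ0) (Or.inr (measure_ne_top μbar B))]
      rwa [mul_comm]
    simpa [Measure.smul_apply, smul_eq_mul, ENNReal.div_eq_inv_mul] using this
  have key : ∀ n : ℕ, P^[n] m ≤ (γ⁻¹ ^ n) • μbar := by
    intro n
    induction n with
    | zero => simpa using hm
    | succ n ih =>
      calc P^[n + 1] m = P (P^[n] m) := by rw [Function.iterate_succ_apply']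
      _ ≤ P ((γ⁻¹ ^ n) • μbar) := hmono _ _ ih
      _ = (γ⁻¹ ^ n) • P μbar := hsmul _ _
      _ ≤ (γ⁻¹ ^ n) • (γ⁻¹ • μbar) := by
          rw [Measure.le_iff]
          intro B hB
          simp only [Measure.smul_apply, smul_eq_mul]
          exact mul_le_mul_right (Measure.le_iff.mp hPμ B hB) _
      _ = (γ⁻¹ ^ (n + 1)) • μbar := by rw [smul_smul, pow_succ]
  intro B hB _ n
  simpa [Measure.smul_apply, smul_eq_mul] using Measure.le_iff.mp (key n) B hB
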